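/- arXiv:0906.4031 — 4 statements merged into one kernel-verified Lean document; each statement's English description precedes it below -/
import Mathlib

section
/- For the Reeve tetrahedron P_h with vertices (0,0,0), (1,0,0), (0,1,0), (1,1,h) (h a positive integer), the number of lattice points in the dilate tP_h equals (h/6)t³ + t² + (2 − h/6)t + 1 for every positive integer t. -/
open MeasureTheory Metric Set Filter Pointwise

/-- The ratio `vol(B(r,x) ∩ P) / vol(B(r,x))`. -/
noncomputable def angleRatio {d : ℕ} (P : Set (EuclideanSpace ℝ (Fin d)))
    (x : EuclideanSpace ℝ (Fin d)) (r : ℝ) : ℝ :=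
  (volume (closedBall x r ∩ P)).toReal / (volume (closedBall x r)).toReal

/-- The solid angle of `x` with respect to `P`:
`ω_P(x) = lim_{r→0⁺} vol(B(r,x) ∩ P)/vol(B(r,x))`. -/
noncomputable def solidAngle {d : ℕ} (P : Set (EuclideanSpace ℝ (Fin d)))
    (x : EuclideanSpace ℝ (Fin d)) : ℝ :=
  limUnder (nhdsWithin (0 : ℝ) (Ioi 0)) (angleRatio P x)

/-- The solid-angle sum `A_P(t) = Σ_{m ∈ ℤ^d} ω_{tP}(m)`. -/
noncomputable def solidAngleSum {d : ℕ} (P : Set (EuclideanSpace ℝ (Fin d))) (t : ℕ) : ℝ :=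
  ∑' m : Fin d → ℤ, solidAngle ((t : ℝ) • P) (WithLp.toLp 2 (fun i => (m i : ℝ)) : EuclideanSpace ℝ (Fin d))

/-- The Reeve tetrahedron `P_h = conv{(0,0,0),(1,0,0),(0,1,0),(1,1,h)}`. -/
noncomputable def reeve (h : ℕ) : Set (EuclideanSpace ℝ (Fin 3)) :=
  convexHull ℝ {(WithLp.toLp 2 ![0,0,0] : EuclideanSpace ℝ (Fin 3)), WithLp.toLp 2 ![1,0,0], WithLp.toLp 2 ![0,1,0], WithLp.toLp 2 ![1,1,(h:ℝ)]}

section Aux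

open Finset

lemma reeve_hull_iff (h : ℕ) (hh : 0 < h) (s : ℝ) (hs : 0 < s) (y : EuclideanSpace ℝ (Fin 3)) :
    y ∈ convexHull ℝ {(WithLp.toLp 2 ![0,0,0] : EuclideanSpace ℝ (Fin 3)), WithLp.toLp 2 ![s,0,0], WithLp.toLp 2 ![0,s,0], WithLp.toLp 2 ![s,s,(h:ℝ)*s]} ↔
      0 ≤ y 2 ∧ y 2 ≤ h * y 0 ∧ y 2 ≤ h * y 1 ∧ (h:ℝ)*(y 0 + y 1) ≤ h*s + y 2 := by
  have hh' : (0:ℝ) < h := by exact_mod_cast hh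
  constructor
  · intro hy
    set H : Set (EuclideanSpace ℝ (Fin 3)) :=
      {v | 0 ≤ v 2 ∧ v 2 ≤ h * v 0 ∧ v 2 ≤ h * v 1 ∧ (h:ℝ)*(v 0 + v 1) ≤ h*s + v 2} with hH
    have hconv : Convex ℝ H := by
      intro u hu v hv α β hα hβ hαβ
      simp only [hH, Set.mem_setOf_eq] at hu hv ⊢
      have e : ∀ i, (α • u + β • v) i = α * u i + β * v i := by
        intro i
        simp [PiLp.add_apply, PiLp.smul_apply, smul_eq_mul]
      rw [e 0, e 1, e 2]
      obtain ⟨u1, u2, u3, u4⟩ := hu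
      obtain ⟨v1, v2, v3, v4⟩ := hv
      refine ⟨by nlinarith, by nlinarith, by nlinarith, by nlinarith⟩
    have hsub : ({(WithLp.toLp 2 ![0,0,0] : EuclideanSpace ℝ (Fin 3)), WithLp.toLp 2 ![s,0,0], WithLp.toLp 2 ![0,s,0], WithLp.toLp 2 ![s,s,(h:ℝ)*s]} :
        Set (EuclideanSpace ℝ (Fin 3))) ⊆ H := by
      intro v hv
      simp only [Set.mem_insert_iff, Set.mem_singleton_iff] at hv
      rcases hv with rfl | rfl | rfl | rfl <;>
        simp only [hH, Set.mem_setOf_eq, Matrix.cons_val_zero, Matrix.cons_val_one,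
          Matrix.head_cons, Matrix.cons_val_two, Matrix.tail_cons] <;>
        refine ⟨by nlinarith, by nlinarith, by nlinarith, by nlinarith⟩
    exact convexHull_min hsub hconv hy
  · rintro ⟨c1, c2, c3, c4⟩
    set w : Fin 4 → ℝ := ![(h:ℝ)*s + y 2 - h*(y 0 + y 1), h*y 0 - y 2, h*y 1 - y 2, y 2] with hw
    set z : Fin 4 → EuclideanSpace ℝ (Fin 3) :=
      ![WithLp.toLp 2 ![0,0,0], WithLp.toLp 2 ![s,0,0], WithLp.toLp 2 ![0,s,0], WithLp.toLp 2 ![s,s,(h:ℝ)*s]] with hz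
    have hsum : ∑ i, w i = (h:ℝ)*s := by
      simp [hw, Fin.sum_univ_four]; ring
    have hmem := Finset.centerMass_mem_convexHull (R := ℝ)
      (s := {(WithLp.toLp 2 ![0,0,0] : EuclideanSpace ℝ (Fin 3)), WithLp.toLp 2 ![s,0,0], WithLp.toLp 2 ![0,s,0], WithLp.toLp 2 ![s,s,(h:ℝ)*s]})
      (Finset.univ : Finset (Fin 4)) (w := w)
      (by intro i _; fin_cases i <;> simp [hw] <;> linarith)
      (by rw [hsum]; positivity)
      (z := z)
      (by intro i _; fin_cases i <;> simp [hz])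
    have hy : Finset.univ.centerMass w z = y := by
      rw [Finset.centerMass, hsum, Fin.sum_univ_four]
      ext i
      fin_cases i <;>
        simp [hw, hz, PiLp.add_apply, PiLp.smul_apply, smul_eq_mul, Matrix.cons_val_zero,
          Matrix.cons_val_one, Matrix.head_cons, Matrix.cons_val_two, Matrix.tail_cons] <;>
        (field_simp; try ring) <;> simp
    rwa [hy] at hmem

lemma scaled_reeve (h : ℕ) (t : ℕ) :
    (t : ℝ) • reeve h =
      convexHull ℝ {(WithLp.toLp 2 ![0,0,0] : EuclideanSpace ℝ (Fin 3)), WithLp.toLp 2 ![(t:ℝ),0,0], WithLp.toLp 2 ![0,(t:ℝ),0],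
        WithLp.toLp 2 ![(t:ℝ),(t:ℝ),(h:ℝ)*t]} := by
  rw [reeve, ← convexHull_smul]
  congr 1
  rw [Set.smul_set_insert, Set.smul_set_insert, Set.smul_set_insert, Set.smul_set_singleton]
  have e0 : (t:ℝ) • (WithLp.toLp 2 ![0,0,0] : EuclideanSpace ℝ (Fin 3)) = WithLp.toLp 2 ![0,0,0] := by
    ext i; fin_cases i <;> simp [PiLp.smul_apply]
  have e1 : (t:ℝ) • (WithLp.toLp 2 ![1,0,0] : EuclideanSpace ℝ (Fin 3)) = WithLp.toLp 2 ![(t:ℝ),0,0] := by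
    ext i; fin_cases i <;> simp [PiLp.smul_apply]
  have e2 : (t:ℝ) • (WithLp.toLp 2 ![0,1,0] : EuclideanSpace ℝ (Fin 3)) = WithLp.toLp 2 ![0,(t:ℝ),0] := by
    ext i; fin_cases i <;> simp [PiLp.smul_apply]
  have e3 : (t:ℝ) • (WithLp.toLp 2 ![1,1,(h:ℝ)] : EuclideanSpace ℝ (Fin 3)) = WithLp.toLp 2 ![(t:ℝ),(t:ℝ),(h:ℝ)*t] := by
    ext i; fin_cases i <;> simp [PiLp.smul_apply] <;> ring
  rw [e0, e1, e2, e3]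

lemma reeve_gauss (n : ℕ) : 2 * ∑ i ∈ range (n+1), i = n * (n+1) := by
  have h1 : (∑ i ∈ range (n+1), i) * 2 = (n+1) * n := by
    simpa using Finset.sum_range_id_mul_two (n+1)
  linarith

lemma reeve_min_sum_succ (n : ℕ) :
    ∑ a ∈ range (n+2), ∑ b ∈ range (n+2), min a b
      = (∑ a ∈ range (n+1), ∑ b ∈ range (n+1), min a b) + (n+1)^2 := by
  rw [Finset.sum_range_succ]
  have h1 : ∑ b ∈ range (n+2), min (n+1) b = (∑ b ∈ range (n+1), b) + (n+1) := by
    rw [Finset.sum_range_succ, min_self]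
    congr 1
    refine Finset.sum_congr rfl fun b hb => ?_
    have := Finset.mem_range.1 hb
    omega
  have h2 : ∀ a ∈ range (n+1), ∑ b ∈ range (n+2), min a b
      = (∑ b ∈ range (n+1), min a b) + a := by
    intro a ha
    rw [Finset.sum_range_succ]
    have := Finset.mem_range.1 ha
    congr 1
    omega
  rw [Finset.sum_congr rfl h2, Finset.sum_add_distrib, h1]
  have g := reeve_gauss n
  have : (n+1)^2 = n*(n+1) + (n+1) := by ring
  linarith

lemma reeve_six_min_sum (n : ℕ) :
    6 * ∑ a ∈ range (n+1), ∑ b ∈ range (n+1), min a b = n * (n+1) * (2*n+1) := by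
  induction n with
  | zero => simp
  | succ n ih =>
    have key := reeve_min_sum_succ n
    rw [show n+1+1 = n+2 from rfl, key, Nat.mul_add, ih]
    ring

lemma reeve_tsub_inner (n a : ℕ) (ha : a ≤ n) :
    2 * ∑ b ∈ range (n+1), (a + b - n) = a * (a+1) := by
  have h0 : ∑ b ∈ range (n+1), (a + b - n) = ∑ b ∈ range (n+1), (a - b) := by
    rw [← Finset.sum_range_reflect (fun b => a + b - n) (n+1)]
    refine Finset.sum_congr rfl fun b hb => ?_
    have := Finset.mem_range.1 hb
    omega
  have h1 : ∑ b ∈ range (n+1), (a - b) = ∑ b ∈ range (a+1), (a - b) := by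
    symm
    apply Finset.sum_subset
    · intro x hx; simp only [Finset.mem_range] at hx ⊢; omega
    · intro x _ hx; simp only [Finset.mem_range] at hx; omega
  have h2 : ∑ b ∈ range (a+1), (a - b) = ∑ b ∈ range (a+1), b := by
    rw [← Finset.sum_range_reflect (fun b => a - b) (a+1)]
    refine Finset.sum_congr rfl fun j hj => ?_
    have := Finset.mem_range.1 hj
    omega
  rw [h0, h1, h2]
  exact reeve_gauss a

lemma reeve_three_sq_sum (n : ℕ) : 3 * ∑ a ∈ range (n+1), a*(a+1) = n*(n+1)*(n+2) := by
  induction n with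
  | zero => simp
  | succ n ih =>
    rw [Finset.sum_range_succ, Nat.mul_add, ih]
    ring

lemma reeve_six_tsub_sum (n : ℕ) :
    6 * ∑ a ∈ range (n+1), ∑ b ∈ range (n+1), (a + b - n) = n*(n+1)*(n+2) := by
  have h : 2 * ∑ a ∈ range (n+1), ∑ b ∈ range (n+1), (a+b-n)
      = ∑ a ∈ range (n+1), a*(a+1) := by
    rw [Finset.mul_sum]
    refine Finset.sum_congr rfl fun a ha => ?_
    exact reeve_tsub_inner n a (Nat.lt_succ_iff.1 (Finset.mem_range.1 ha))
  calc 6 * ∑ a ∈ range (n+1), ∑ b ∈ range (n+1), (a+b-n)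
      = 3 * (2 * ∑ a ∈ range (n+1), ∑ b ∈ range (n+1), (a+b-n)) := by ring
    _ = 3 * ∑ a ∈ range (n+1), a*(a+1) := by rw [h]
    _ = n*(n+1)*(n+2) := reeve_three_sq_sum n

lemma reeve_count_formula (h t : ℕ) :
    6 * (∑ a ∈ range (t+1), ∑ b ∈ range (t+1), (h * min a b + 1 - (h*(a+b) - h*t)))
      + h * (t*(t+1)*(t+2)) = h * (t*(t+1)*(2*t+1)) + 6 * (t+1)^2 := by
  have E1 : (∑ a ∈ range (t+1), ∑ b ∈ range (t+1), (h * min a b + 1 - (h*(a+b) - h*t)))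
      + h * ∑ a ∈ range (t+1), ∑ b ∈ range (t+1), ((a+b) - t)
      = h * (∑ a ∈ range (t+1), ∑ b ∈ range (t+1), min a b) + (t+1)^2 := by
    rw [Finset.mul_sum, Finset.mul_sum, ← Finset.sum_add_distrib]
    have hsq : (t+1)^2 = ∑ _a ∈ range (t+1), (t+1) := by
      simp [sq, Finset.sum_const, Finset.card_range, smul_eq_mul]
    rw [hsq, ← Finset.sum_add_distrib]
    refine Finset.sum_congr rfl fun a ha => ?_
    have ha' : a ≤ t := Nat.lt_succ_iff.1 (Finset.mem_range.1 ha)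
    rw [Finset.mul_sum, Finset.mul_sum, ← Finset.sum_add_distrib]
    have hterm : ∀ b ∈ range (t+1),
        h * min a b + 1 - (h*(a+b) - h*t) + h*((a+b)-t) = h * min a b + 1 := by
      intro b hb
      have hb' : b ≤ t := Nat.lt_succ_iff.1 (Finset.mem_range.1 hb)
      have hkey : h*(a+b) - h*t = h*((a+b)-t) := (Nat.mul_sub h (a+b) t).symm
      have hle : (a+b) - t ≤ min a b := by omega
      have hle2 : h*((a+b)-t) ≤ h * min a b := Nat.mul_le_mul_left h hle
      rw [hkey]
      omega
    rw [Finset.sum_congr rfl hterm, Finset.sum_add_distrib]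
    simp
  have T6 := reeve_six_tsub_sum t
  have M6 := reeve_six_min_sum t
  calc 6 * (∑ a ∈ range (t+1), ∑ b ∈ range (t+1), (h * min a b + 1 - (h*(a+b) - h*t)))
        + h * (t*(t+1)*(t+2))
      = 6 * (∑ a ∈ range (t+1), ∑ b ∈ range (t+1), (h * min a b + 1 - (h*(a+b) - h*t)))
        + h * (6 * ∑ a ∈ range (t+1), ∑ b ∈ range (t+1), ((a+b) - t)) := by rw [T6]
    _ = 6 * ((∑ a ∈ range (t+1), ∑ b ∈ range (t+1), (h * min a b + 1 - (h*(a+b) - h*t)))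
        + h * ∑ a ∈ range (t+1), ∑ b ∈ range (t+1), ((a+b) - t)) := by ring
    _ = 6 * (h * (∑ a ∈ range (t+1), ∑ b ∈ range (t+1), min a b) + (t+1)^2) := by rw [E1]
    _ = h * (6 * ∑ a ∈ range (t+1), ∑ b ∈ range (t+1), min a b) + 6*(t+1)^2 := by ring
    _ = h * (t*(t+1)*(2*t+1)) + 6 * (t+1)^2 := by rw [M6]

set_option maxHeartbeats 1000000 in
lemma reeve_card_eq (h t : ℕ) (hh : 0 < h) :
    Nat.card {m : Fin 3 → ℤ // 0 ≤ m 2 ∧ m 2 ≤ (h:ℤ) * m 0 ∧ m 2 ≤ (h:ℤ) * m 1 ∧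
        (h:ℤ)*(m 0 + m 1) ≤ (h:ℤ)*t + m 2}
      = ∑ a ∈ range (t+1), ∑ b ∈ range (t+1), (h * min a b + 1 - (h*(a+b) - h*t)) := by
  have hpos : (0:ℤ) < (h:ℤ) := by exact_mod_cast hh
  set F : Finset ((_ : ℕ × ℕ) × ℕ) :=
    (range (t+1) ×ˢ range (t+1)).sigma
      (fun p => Finset.Icc (h*(p.1+p.2) - h*t) (h * min p.1 p.2)) with hF
  have memF : ∀ x : (_ : ℕ × ℕ) × ℕ, x ∈ F ↔
      (x.1.1 < t+1 ∧ x.1.2 < t+1 ∧ h*(x.1.1+x.1.2) - h*t ≤ x.2 ∧ x.2 ≤ h * min x.1.1 x.1.2) := by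
    intro x
    rw [hF]
    simp [Finset.mem_sigma, Finset.mem_product, Finset.mem_Icc, and_assoc]
  have hcard : F.card
      = ∑ a ∈ range (t+1), ∑ b ∈ range (t+1), (h * min a b + 1 - (h*(a+b) - h*t)) := by
    rw [hF, Finset.card_sigma, Finset.sum_product]
    refine Finset.sum_congr rfl fun a _ => Finset.sum_congr rfl fun b _ => ?_
    rw [Nat.card_Icc]
  rw [← hcard, ← Nat.card_eq_finsetCard]
  refine Nat.card_congr ⟨fun m => ⟨⟨⟨(m.1 0).toNat, (m.1 1).toNat⟩, (m.1 2).toNat⟩, ?_⟩,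
    fun x => ⟨![(x.1.1.1 : ℤ), (x.1.1.2 : ℤ), (x.1.2 : ℤ)], ?_⟩, fun m => ?_, fun x => ?_⟩
  · -- forward membership
    obtain ⟨m, h1, h2, h3, h4⟩ := m
    have hm0 : 0 ≤ m 0 := by nlinarith
    have hm1 : 0 ≤ m 1 := by nlinarith
    have e0 : ((m 0).toNat : ℤ) = m 0 := Int.toNat_of_nonneg hm0
    have e1 : ((m 1).toNat : ℤ) = m 1 := Int.toNat_of_nonneg hm1
    have e2 : ((m 2).toNat : ℤ) = m 2 := Int.toNat_of_nonneg h1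
    rw [memF]
    dsimp only
    have ha : (m 0) ≤ t := le_of_mul_le_mul_left (by linarith) hpos
    have hb : (m 1) ≤ t := le_of_mul_le_mul_left (by linarith) hpos
    refine ⟨?_, ?_, ?_, ?_⟩
    · have : ((m 0).toNat : ℤ) ≤ t := by rw [e0]; exact ha
      omega
    · have : ((m 1).toNat : ℤ) ≤ t := by rw [e1]; exact hb
      omega
    · rw [Nat.sub_le_iff_le_add]
      have : (h:ℤ) * ((m 0).toNat + (m 1).toNat) ≤ (m 2).toNat + (h:ℤ)*t := by
        rw [e0, e1, e2]; linarith
      exact_mod_cast this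
    · rw [← Nat.mul_min_mul_left]
      refine le_min ?_ ?_
      · have : ((m 2).toNat : ℤ) ≤ (h:ℤ) * (m 0).toNat := by rw [e0, e2]; exact h2
        exact_mod_cast this
      · have : ((m 2).toNat : ℤ) ≤ (h:ℤ) * (m 1).toNat := by rw [e1, e2]; exact h3
        exact_mod_cast this
  · -- backward membership
    obtain ⟨x, hx⟩ := x
    rw [memF] at hx
    obtain ⟨ha, hb, hlo, hhi⟩ := hx
    obtain ⟨⟨a, b⟩, c⟩ := x
    simp only at ha hb hlo hhi
    have hca : c ≤ h * a := le_trans hhi (Nat.mul_le_mul_left h (min_le_left a b))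
    have hcb : c ≤ h * b := le_trans hhi (Nat.mul_le_mul_left h (min_le_right a b))
    have hab : h * (a + b) ≤ c + h * t := Nat.sub_le_iff_le_add.1 hlo
    show (0:ℤ) ≤ (![(a:ℤ), (b:ℤ), (c:ℤ)]) 2 ∧ _
    simp only [Matrix.cons_val_zero, Matrix.cons_val_one, Matrix.head_cons,
      Matrix.cons_val_two, Matrix.tail_cons]
    refine ⟨by positivity, by exact_mod_cast hca, by exact_mod_cast hcb, ?_⟩
    have : ((h * (a + b) : ℕ) : ℤ) ≤ ((c + h * t : ℕ) : ℤ) := by exact_mod_cast hab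
    push_cast at this
    linarith
  · -- left inverse
    obtain ⟨m, h1, h2, h3, h4⟩ := m
    have hm0 : 0 ≤ m 0 := by nlinarith
    have hm1 : 0 ≤ m 1 := by nlinarith
    apply Subtype.ext
    funext i
    fin_cases i <;>
      simp [Int.toNat_of_nonneg, hm0, hm1, h1]
  · -- right inverse
    obtain ⟨⟨⟨a, b⟩, c⟩, hx⟩ := x
    apply Subtype.ext
    simp

end Aux

/-- The Ehrhart polynomial of the Reeve tetrahedron:
`L_{P_h}(t) = (h/6)t³ + t² + (2 − h/6)t + 1`. -/
theorem ehrhart_reeve (h : ℕ) (hh : 0 < h) (t : ℕ) (ht : 0 < t) :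
    (Nat.card {m : Fin 3 → ℤ //
        (WithLp.toLp 2 (fun i => (m i : ℝ)) : EuclideanSpace ℝ (Fin 3)) ∈ (t : ℝ) • reeve h} : ℝ) =
      (h : ℝ) / 6 * t ^ 3 + t ^ 2 + (2 - (h : ℝ) / 6) * t + 1 := by
  have ht' : (0:ℝ) < t := by exact_mod_cast ht
  have key : ∀ m : Fin 3 → ℤ,
      ((WithLp.toLp 2 (fun i => (m i : ℝ)) : EuclideanSpace ℝ (Fin 3)) ∈ (t : ℝ) • reeve h) ↔
        (0 ≤ m 2 ∧ m 2 ≤ (h:ℤ) * m 0 ∧ m 2 ≤ (h:ℤ) * m 1 ∧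
          (h:ℤ)*(m 0 + m 1) ≤ (h:ℤ)*t + m 2) := by
    intro m
    rw [scaled_reeve h t, reeve_hull_iff h hh (t:ℝ) ht']
    constructor
    · rintro ⟨c1, c2, c3, c4⟩
      simp only [PiLp.toLp_apply] at c1 c2 c3 c4
      exact ⟨by exact_mod_cast c1, by exact_mod_cast c2, by exact_mod_cast c3,
        by exact_mod_cast c4⟩
    · rintro ⟨c1, c2, c3, c4⟩
      simp only [PiLp.toLp_apply]
      exact ⟨by exact_mod_cast c1, by exact_mod_cast c2, by exact_mod_cast c3,
        by exact_mod_cast c4⟩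
  have hcount : Nat.card {m : Fin 3 → ℤ //
      (WithLp.toLp 2 (fun i => (m i : ℝ)) : EuclideanSpace ℝ (Fin 3)) ∈ (t : ℝ) • reeve h}
      = ∑ a ∈ Finset.range (t+1), ∑ b ∈ Finset.range (t+1),
          (h * min a b + 1 - (h*(a+b) - h*t)) := by
    rw [Nat.card_congr (Equiv.subtypeEquivRight key)]
    exact reeve_card_eq h t hh
  rw [hcount]
  have hf := reeve_count_formula h t
  have hf' : 6 * ((∑ a ∈ Finset.range (t+1), ∑ b ∈ Finset.range (t+1),
        (h * min a b + 1 - (h*(a+b) - h*t)) : ℕ) : ℝ)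
      + (h:ℝ) * ((t:ℝ)*((t:ℝ)+1)*((t:ℝ)+2))
      = (h:ℝ) * ((t:ℝ)*((t:ℝ)+1)*(2*(t:ℝ)+1)) + 6 * ((t:ℝ)+1)^2 := by
    exact_mod_cast hf
  linear_combination hf' / 6
end

section
/- For a d-simplex Δ with d > 2, the sum of the solid angles at the vertices of Δ is strictly less than 1/2; for d = 2 it equals exactly 1/2. -/
open MeasureTheory Metric Set Filter Pointwise

namespace VertexSolidAngleAux

variable {d : ℕ}

/-- The tangent cone at vertex `i`, translated to the origin: the set of directions `y`
with all barycentric coordinates (except possibly the `i`-th) of slope `≥ 0`. -/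
def Kcone (b : AffineBasis (Fin (d + 1)) ℝ (EuclideanSpace ℝ (Fin d)))
    (i : Fin (d + 1)) : Set (EuclideanSpace ℝ (Fin d)) :=
  {y | ∀ k, k ≠ i → 0 ≤ (b.coord k).linear y}

lemma lin_apply (b : AffineBasis (Fin (d + 1)) ℝ (EuclideanSpace ℝ (Fin d)))
    (k : Fin (d + 1)) (x y : EuclideanSpace ℝ (Fin d)) :
    b.coord k (y + x) = (b.coord k).linear y + b.coord k x :=
  (b.coord k).map_vadd x y

lemma lin_sub (b : AffineBasis (Fin (d + 1)) ℝ (EuclideanSpace ℝ (Fin d)))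
    (k : Fin (d + 1)) (p q : EuclideanSpace ℝ (Fin d)) :
    (b.coord k).linear (p - q) = b.coord k p - b.coord k q := by
  have h := lin_apply b k q (p - q)
  rw [sub_add_cancel] at h
  linarith

lemma sum_lin (b : AffineBasis (Fin (d + 1)) ℝ (EuclideanSpace ℝ (Fin d)))
    (y : EuclideanSpace ℝ (Fin d)) :
    ∑ k, (b.coord k).linear y = 0 := by
  have h1 : ∑ k, ((b.coord k).linear y + b.coord k 0) = 1 := by
    have := b.sum_coord_apply_eq_one (y + 0)
    simpa only [lin_apply] using this
  have h2 := b.sum_coord_apply_eq_one (0 : EuclideanSpace ℝ (Fin d))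
  rw [Finset.sum_add_distrib, h2] at h1
  linarith

lemma lin_inj (b : AffineBasis (Fin (d + 1)) ℝ (EuclideanSpace ℝ (Fin d)))
    {y : EuclideanSpace ℝ (Fin d)} (h : ∀ k, (b.coord k).linear y = 0) : y = 0 := by
  have hy : (y + 0 : EuclideanSpace ℝ (Fin d)) = 0 :=
    b.ext_elem fun k => by rw [lin_apply, h k, zero_add]
  simpa using hy

lemma isClosed_Kcone (b : AffineBasis (Fin (d + 1)) ℝ (EuclideanSpace ℝ (Fin d)))
    (i : Fin (d + 1)) : IsClosed (Kcone b i) := by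
  have : Kcone b i = ⋂ k, ⋂ (_ : k ≠ i), (b.coord k).linear ⁻¹' Ici 0 := by
    ext y; simp [Kcone, Set.mem_iInter]
  rw [this]
  exact isClosed_iInter fun k => isClosed_iInter fun _ =>
    isClosed_Ici.preimage (b.coord k).linear.continuous_of_finiteDimensional

lemma smul_Kcone (b : AffineBasis (Fin (d + 1)) ℝ (EuclideanSpace ℝ (Fin d)))
    (i : Fin (d + 1)) {r : ℝ} (hr : 0 < r) : r • Kcone b i = Kcone b i := by
  apply Set.Subset.antisymm
  · rintro _ ⟨y, hy, rfl⟩ k hk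
    rw [LinearMap.map_smul, smul_eq_mul]
    exact mul_nonneg hr.le (hy k hk)
  · intro z hz
    refine ⟨r⁻¹ • z, fun k hk => ?_, smul_inv_smul₀ hr.ne' z⟩
    rw [LinearMap.map_smul, smul_eq_mul]
    exact mul_nonneg (inv_nonneg.2 hr.le) (hz k hk)

/-- The key computation: the solid angle at the vertex `b i` of the simplex is the measure
of the (translated) tangent cone inside the unit ball, normalized. -/
lemma solidAngle_vertex (b : AffineBasis (Fin (d + 1)) ℝ (EuclideanSpace ℝ (Fin d)))
    (i : Fin (d + 1)) :
    solidAngle (convexHull ℝ (range ⇑b)) (b i)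
      = (volume (Kcone b i ∩ closedBall 0 1)).toReal
        / (volume (closedBall (0 : EuclideanSpace ℝ (Fin d)) 1)).toReal := by
  set Δ := convexHull ℝ (range ⇑b) with hΔdef
  have hΔ : Δ = {x | ∀ k, 0 ≤ b.coord k x} := b.convexHull_eq_nonneg_coord
  -- find a radius on which `b.coord i` is positive
  have hcont : Continuous (b.coord i) := (b.coord i).continuous_of_finiteDimensional
  have hopen : IsOpen {x : EuclideanSpace ℝ (Fin d) | 0 < b.coord i x} :=
    isOpen_Ioi.preimage hcont
  have hmem : b i ∈ {x : EuclideanSpace ℝ (Fin d) | 0 < b.coord i x} := by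
    simp [b.coord_apply_eq i]
  obtain ⟨ε, hε, hball⟩ := Metric.isOpen_iff.1 hopen _ hmem
  set r₀ := ε / 2 with hr₀def
  have hr₀ : 0 < r₀ := by positivity
  have hposb : ∀ x ∈ closedBall (b i) r₀, 0 < b.coord i x := by
    intro x hx
    exact hball (lt_of_le_of_lt (mem_closedBall.1 hx) (by linarith))
  set A := volume (Kcone b i ∩ closedBall (0 : EuclideanSpace ℝ (Fin d)) 1) with hAdef
  set M := volume (closedBall (0 : EuclideanSpace ℝ (Fin d)) 1) with hMdef
  have key : ∀ r : ℝ, 0 < r → r ≤ r₀ →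
      angleRatio Δ (b i) r = A.toReal / M.toReal := by
    intro r hr hrr₀
    have hset : (fun y => b i + y) ⁻¹' (closedBall (b i) r ∩ Δ)
        = Kcone b i ∩ closedBall 0 r := by
      ext y
      have hdist : b i + y ∈ closedBall (b i) r ↔ y ∈ closedBall (0 : EuclideanSpace ℝ (Fin d)) r := by
        simp [mem_closedBall, dist_eq_norm, mem_closedBall_zero_iff, add_sub_cancel_left]
      have hcoord : ∀ k, b.coord k (b i + y) = (b.coord k).linear y + b.coord k (b i) := by
        intro k
        rw [add_comm (b i) y]
        exact lin_apply b k (b i) y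
      constructor
      · rintro ⟨h1, h2⟩
        refine ⟨fun k hk => ?_, hdist.1 h1⟩
        have := (hΔ ▸ h2) k
        rw [hcoord k, b.coord_apply_ne hk] at this
        linarith
      · rintro ⟨h1, h2⟩
        refine ⟨hdist.2 h2, ?_⟩
        rw [hΔ]
        intro k
        rcases eq_or_ne k i with rfl | hk
        · have hmem' : b k + y ∈ closedBall (b k) r₀ :=
            closedBall_subset_closedBall hrr₀ (hdist.2 h2)
          exact (hposb _ hmem').le
        · rw [hcoord k, b.coord_apply_ne hk, add_zero]
          exact h1 k hk
    have h1 : volume (closedBall (b i) r ∩ Δ) = volume (Kcone b i ∩ closedBall 0 r) := by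
      rw [← hset, measure_preimage_add]
    have h2 : Kcone b i ∩ closedBall (0 : EuclideanSpace ℝ (Fin d)) r
        = r • (Kcone b i ∩ closedBall 0 1) := by
      rw [smul_set_inter₀ hr.ne', smul_Kcone b i hr,
        _root_.smul_closedBall r (0 : EuclideanSpace ℝ (Fin d)) zero_le_one]
      simp [Real.norm_eq_abs, abs_of_pos hr]
    have h3 : volume (Kcone b i ∩ closedBall (0 : EuclideanSpace ℝ (Fin d)) r)
        = ENNReal.ofReal (r ^ d) * A := by
      rw [h2, Measure.addHaar_smul, finrank_euclideanSpace_fin,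
        abs_of_nonneg (pow_nonneg hr.le _), hAdef]
    have h4 : volume (closedBall (b i) r) = ENNReal.ofReal (r ^ d) * M := by
      rw [Measure.addHaar_closedBall' volume _ hr.le, finrank_euclideanSpace_fin, hMdef]
    have hc : ((ENNReal.ofReal (r ^ d)).toReal : ℝ) ≠ 0 := by
      rw [ENNReal.toReal_ofReal (by positivity)]
      positivity
    simp only [angleRatio]
    rw [h1, h3, h4, ENNReal.toReal_mul, ENNReal.toReal_mul,
      mul_div_mul_left _ _ hc]
  have htend : Filter.Tendsto (angleRatio Δ (b i)) (nhdsWithin (0 : ℝ) (Ioi 0))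
      (nhds (A.toReal / M.toReal)) := by
    apply Filter.Tendsto.congr' _ tendsto_const_nhds
    filter_upwards [Ioc_mem_nhdsGT hr₀] with r hr
    exact (key r hr.1 hr.2).symm
  exact htend.limUnder_eq

/-- `Kcone b i ∩ B` or its negative, indexed by `Fin (d+1) × Bool`. -/
def F (b : AffineBasis (Fin (d + 1)) ℝ (EuclideanSpace ℝ (Fin d)))
    (p : Fin (d + 1) × Bool) : Set (EuclideanSpace ℝ (Fin d)) :=
  (if p.2 then Kcone b p.1 else -Kcone b p.1) ∩ closedBall 0 1

lemma F_subset (b : AffineBasis (Fin (d + 1)) ℝ (EuclideanSpace ℝ (Fin d)))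
    (p : Fin (d + 1) × Bool) : F b p ⊆ closedBall 0 1 := inter_subset_right

lemma mem_F_true (b : AffineBasis (Fin (d + 1)) ℝ (EuclideanSpace ℝ (Fin d)))
    {i : Fin (d + 1)} {y : EuclideanSpace ℝ (Fin d)} :
    y ∈ F b (i, true) ↔ y ∈ Kcone b i ∧ y ∈ closedBall (0 : EuclideanSpace ℝ (Fin d)) 1 := by
  simp [F]

lemma mem_F_false (b : AffineBasis (Fin (d + 1)) ℝ (EuclideanSpace ℝ (Fin d)))
    {i : Fin (d + 1)} {y : EuclideanSpace ℝ (Fin d)} :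
    y ∈ F b (i, false) ↔ (-y) ∈ Kcone b i ∧ y ∈ closedBall (0 : EuclideanSpace ℝ (Fin d)) 1 := by
  simp [F, Set.mem_neg]

lemma measurableSet_F (b : AffineBasis (Fin (d + 1)) ℝ (EuclideanSpace ℝ (Fin d)))
    (p : Fin (d + 1) × Bool) : MeasurableSet (F b p) := by
  rcases p with ⟨i, (_ | _)⟩
  · exact ((isClosed_Kcone b i).neg.measurableSet).inter measurableSet_closedBall
  · exact ((isClosed_Kcone b i).measurableSet).inter measurableSet_closedBall

lemma span_singleton_ne_top (hd : 2 ≤ d) (w : EuclideanSpace ℝ (Fin d)) :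
    Submodule.span ℝ ({w} : Set (EuclideanSpace ℝ (Fin d))) ≠ ⊤ := by
  intro h
  have h1 : Module.finrank ℝ (Submodule.span ℝ ({w} : Set (EuclideanSpace ℝ (Fin d)))) ≤ 1 := by
    classical
    refine (finrank_span_le_card _).trans ?_
    simp
  rw [h, finrank_top, finrank_euclideanSpace_fin] at h1
  omega

/-- If `y` is in two distinct (weak) vertex cones, all coordinate slopes are `0`. -/
lemma key_zero (b : AffineBasis (Fin (d + 1)) ℝ (EuclideanSpace ℝ (Fin d)))
    {y : EuclideanSpace ℝ (Fin d)} {i j : Fin (d + 1)} (hij : i ≠ j)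
    (h1 : ∀ k, k ≠ i → 0 ≤ (b.coord k).linear y)
    (h2 : ∀ k, k ≠ j → 0 ≤ (b.coord k).linear y) : y = 0 := by
  have hnn : ∀ k, 0 ≤ (b.coord k).linear y := by
    intro k
    rcases eq_or_ne k i with rfl | hk
    · exact h2 k hij
    · exact h1 k hk
  apply lin_inj b
  intro k
  have := (Finset.sum_eq_zero_iff_of_nonneg (fun k _ => hnn k)).mp (sum_lin b y)
  exact this k (Finset.mem_univ k)

/-- If `y` is in a vertex cone and in the negative of the same vertex cone, `y = 0`. -/
lemma key_diag (b : AffineBasis (Fin (d + 1)) ℝ (EuclideanSpace ℝ (Fin d)))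
    {y : EuclideanSpace ℝ (Fin d)} {i : Fin (d + 1)}
    (h1 : ∀ k, k ≠ i → 0 ≤ (b.coord k).linear y)
    (h2 : ∀ k, k ≠ i → (b.coord k).linear y ≤ 0) : y = 0 := by
  have hz : ∀ k, k ≠ i → (b.coord k).linear y = 0 :=
    fun k hk => le_antisymm (h2 k hk) (h1 k hk)
  have hi : (b.coord i).linear y = 0 := by
    have hs := sum_lin b y
    rwa [Finset.sum_eq_single i (fun k _ hk => hz k hk) (fun h => absurd (Finset.mem_univ i) h)]
      at hs
  apply lin_inj b
  intro k
  rcases eq_or_ne k i with rfl | hk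
  · exact hi
  · exact hz k hk

/-- If `y ∈ K_i` and `-y ∈ K_j` with `i ≠ j`, then `y` lies on the line through `b j - b i`. -/
lemma key_line (b : AffineBasis (Fin (d + 1)) ℝ (EuclideanSpace ℝ (Fin d)))
    {y : EuclideanSpace ℝ (Fin d)} {i j : Fin (d + 1)} (hij : i ≠ j)
    (h1 : ∀ k, k ≠ i → 0 ≤ (b.coord k).linear y)
    (h2 : ∀ k, k ≠ j → (b.coord k).linear y ≤ 0) :
    y ∈ Submodule.span ℝ ({(b j : EuclideanSpace ℝ (Fin d)) - b i} : Set (EuclideanSpace ℝ (Fin d))) := by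
  classical
  set L := fun k => (b.coord k).linear y with hL
  have hz : ∀ k, k ≠ i → k ≠ j → L k = 0 := fun k hki hkj =>
    le_antisymm (h2 k hkj) (h1 k hki)
  have hsum : L i + L j = 0 := by
    have hs := sum_lin b y
    have : ∑ k ∈ ({i, j} : Finset (Fin (d + 1))), L k = ∑ k, L k := by
      apply Finset.sum_subset (Finset.subset_univ _)
      intro k _ hk
      simp only [Finset.mem_insert, Finset.mem_singleton, not_or] at hk
      exact hz k hk.1 hk.2
    rw [← this, Finset.sum_pair hij] at hs
    exact hs
  have hw : ∀ k, (b.coord k).linear ((b j : EuclideanSpace ℝ (Fin d)) - b i)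
      = (if k = j then 1 else 0) - (if k = i then 1 else 0) := by
    intro k
    rw [lin_sub]
    rcases eq_or_ne k j with rfl | hkj <;> rcases eq_or_ne k i with rfl | hki <;>
      simp_all [AffineBasis.coord_apply_eq, AffineBasis.coord_apply_ne]
  refine Submodule.mem_span_singleton.mpr ⟨L j, ?_⟩
  have hzero : (L j) • ((b j : EuclideanSpace ℝ (Fin d)) - b i) - y = 0 := by
    apply lin_inj b
    intro k
    rw [map_sub, LinearMap.map_smul, hw k, smul_eq_mul]
    rcases eq_or_ne k j with rfl | hkj
    · rw [if_pos rfl, if_neg (Ne.symm hij)]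
      simp [hL]
    rcases eq_or_ne k i with rfl | hki
    · rw [if_neg hkj, if_pos rfl]
      have : L k = -(L j) := by linarith
      simp only [hL] at this ⊢
      rw [this]; ring
    · rw [if_neg hkj, if_neg hki]
      have := hz k hki hkj
      simp only [hL] at this ⊢
      rw [this]; ring
  have := sub_eq_zero.mp hzero
  exact this

lemma pairwise_aedisjoint (hd : 2 ≤ d)
    (b : AffineBasis (Fin (d + 1)) ℝ (EuclideanSpace ℝ (Fin d))) :
    Pairwise (Function.onFun (AEDisjoint volume) (F b)) := by
  intro p q hpq
  obtain ⟨i, s⟩ := p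
  obtain ⟨j, t⟩ := q
  have main : ∃ w : EuclideanSpace ℝ (Fin d),
      F b (i, s) ∩ F b (j, t) ⊆ (Submodule.span ℝ ({w} : Set (EuclideanSpace ℝ (Fin d))) :
        Submodule ℝ (EuclideanSpace ℝ (Fin d))) := by
    rcases s <;> rcases t
    · -- false, false
      have hij : i ≠ j := by
        intro h; exact hpq (by rw [h])
      refine ⟨0, fun y hy => ?_⟩
      obtain ⟨hy1, hy2⟩ := hy
      obtain ⟨hk1, -⟩ := (mem_F_false b).1 hy1
      obtain ⟨hk2, -⟩ := (mem_F_false b).1 hy2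
      have : -y = 0 := key_zero b hij hk1 hk2
      have hy0 : y = 0 := by simpa using congrArg Neg.neg this
      rw [hy0]; exact Submodule.zero_mem _
    · -- false, true : -y ∈ K i, y ∈ K j
      obtain hij | rfl := ne_or_eq i j
      · refine ⟨(b i : EuclideanSpace ℝ (Fin d)) - b j, fun y hy => ?_⟩
        obtain ⟨hy1, hy2⟩ := hy
        obtain ⟨hk1, -⟩ := (mem_F_false b).1 hy1
        obtain ⟨hk2, -⟩ := (mem_F_true b).1 hy2
        have h2' : ∀ k, k ≠ i → (b.coord k).linear y ≤ 0 := by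
          intro k hk
          have := hk1 k hk
          rw [map_neg] at this
          linarith
        exact key_line b (Ne.symm hij) hk2 h2'
      · refine ⟨0, fun y hy => ?_⟩
        obtain ⟨hy1, hy2⟩ := hy
        obtain ⟨hk1, -⟩ := (mem_F_false b).1 hy1
        obtain ⟨hk2, -⟩ := (mem_F_true b).1 hy2
        have h2' : ∀ k, k ≠ i → (b.coord k).linear y ≤ 0 := by
          intro k hk
          have := hk1 k hk
          rw [map_neg] at this
          linarith
        have hy0 : y = 0 := key_diag b hk2 h2'
        rw [hy0]; exact Submodule.zero_mem _
    · -- true, false : y ∈ K i, -y ∈ K j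
      obtain hij | rfl := ne_or_eq i j
      · refine ⟨(b j : EuclideanSpace ℝ (Fin d)) - b i, fun y hy => ?_⟩
        obtain ⟨hy1, hy2⟩ := hy
        obtain ⟨hk1, -⟩ := (mem_F_true b).1 hy1
        obtain ⟨hk2, -⟩ := (mem_F_false b).1 hy2
        have h2' : ∀ k, k ≠ j → (b.coord k).linear y ≤ 0 := by
          intro k hk
          have := hk2 k hk
          rw [map_neg] at this
          linarith
        exact key_line b hij hk1 h2'
      · refine ⟨0, fun y hy => ?_⟩
        obtain ⟨hy1, hy2⟩ := hy
        obtain ⟨hk1, -⟩ := (mem_F_true b).1 hy1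
        obtain ⟨hk2, -⟩ := (mem_F_false b).1 hy2
        have h2' : ∀ k, k ≠ i → (b.coord k).linear y ≤ 0 := by
          intro k hk
          have := hk2 k hk
          rw [map_neg] at this
          linarith
        have hy0 : y = 0 := key_diag b hk1 h2'
        rw [hy0]; exact Submodule.zero_mem _
    · -- true, true
      have hij : i ≠ j := by
        intro h; exact hpq (by rw [h])
      refine ⟨0, fun y hy => ?_⟩
      obtain ⟨hy1, hy2⟩ := hy
      obtain ⟨hk1, -⟩ := (mem_F_true b).1 hy1
      obtain ⟨hk2, -⟩ := (mem_F_true b).1 hy2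
      have hy0 : y = 0 := key_zero b hij hk1 hk2
      rw [hy0]; exact Submodule.zero_mem _
  obtain ⟨w, hw⟩ := main
  exact measure_mono_null hw (Measure.addHaar_submodule volume _ (span_singleton_ne_top hd w))

lemma volume_neg_set (S : Set (EuclideanSpace ℝ (Fin d))) : volume (-S) = volume S := by
  have h : -S = (-1 : ℝ) • S := by
    ext y
    constructor
    · intro hy
      exact ⟨-y, hy, by simp⟩
    · rintro ⟨x, hx, rfl⟩
      simpa [Set.mem_neg] using hx
  rw [h, Measure.addHaar_smul]
  simp

lemma measure_iUnion_F (hd : 2 ≤ d)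
    (b : AffineBasis (Fin (d + 1)) ℝ (EuclideanSpace ℝ (Fin d))) :
    volume (⋃ p, F b p) = 2 * ∑ i, volume (Kcone b i ∩ closedBall 0 1) := by
  rw [measure_iUnion₀ (pairwise_aedisjoint hd b)
    (fun p => (measurableSet_F b p).nullMeasurableSet), tsum_fintype,
    Fintype.sum_prod_type]
  have hFt : ∀ i, F b (i, true) = Kcone b i ∩ closedBall 0 1 := by
    intro i; simp [F]
  have hFf : ∀ i : Fin (d + 1), volume (F b (i, false)) = volume (Kcone b i ∩ closedBall 0 1) := by
    intro i
    have h1 : F b (i, false) = -(Kcone b i ∩ closedBall 0 1) := by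
      ext y
      simp [F, Set.mem_neg, mem_closedBall_zero_iff]
    rw [h1, volume_neg_set, ← hFt]
  have : ∀ i : Fin (d + 1), ∑ s : Bool, volume (F b (i, s))
      = 2 * volume (Kcone b i ∩ closedBall 0 1) := by
    intro i
    rw [Fintype.sum_bool, hFt, hFf, two_mul]
  simp_rw [this]
  rw [Finset.mul_sum]

lemma sum_repr (b : AffineBasis (Fin (d + 1)) ℝ (EuclideanSpace ℝ (Fin d))) :
    ∑ i, solidAngle (convexHull ℝ (range ⇑b)) (b i)
      = (∑ i, volume (Kcone b i ∩ closedBall 0 1)).toReal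
        / (volume (closedBall (0 : EuclideanSpace ℝ (Fin d)) 1)).toReal := by
  have hfin : ∀ i : Fin (d + 1), volume (Kcone b i ∩ closedBall (0 : EuclideanSpace ℝ (Fin d)) 1) ≠ ⊤ :=
    fun i => ((measure_mono inter_subset_right).trans_lt measure_closedBall_lt_top).ne
  rw [ENNReal.toReal_sum (fun i _ => hfin i), Finset.sum_div]
  exact Finset.sum_congr rfl fun i _ => solidAngle_vertex b i

/-- The cover property in dimension 2: every point is in some cone or its negative. -/
lemma cover_two (b : AffineBasis (Fin 3) ℝ (EuclideanSpace ℝ (Fin 2)))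
    (y : EuclideanSpace ℝ (Fin 2)) :
    ∃ i : Fin 3, (∀ k, k ≠ i → 0 ≤ (b.coord k).linear y)
      ∨ (∀ k, k ≠ i → (b.coord k).linear y ≤ 0) := by
  set L : Fin 3 → ℝ := fun k => (b.coord k).linear y
  have hfin : ∀ k : Fin 3, k = 0 ∨ k = 1 ∨ k = 2 := by decide
  rcases le_total 0 (L 0) with h0 | h0 <;> rcases le_total 0 (L 1) with h1 | h1 <;>
    rcases le_total 0 (L 2) with h2 | h2
  · refine ⟨0, Or.inl fun k hk => ?_⟩
    rcases hfin k with rfl | rfl | rfl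
    · exact absurd rfl hk
    · exact h1
    · exact h2
  · refine ⟨2, Or.inl fun k hk => ?_⟩
    rcases hfin k with rfl | rfl | rfl
    · exact h0
    · exact h1
    · exact absurd rfl hk
  · refine ⟨1, Or.inl fun k hk => ?_⟩
    rcases hfin k with rfl | rfl | rfl
    · exact h0
    · exact absurd rfl hk
    · exact h2
  · refine ⟨0, Or.inr fun k hk => ?_⟩
    rcases hfin k with rfl | rfl | rfl
    · exact absurd rfl hk
    · exact h1
    · exact h2
  · refine ⟨0, Or.inl fun k hk => ?_⟩
    rcases hfin k with rfl | rfl | rfl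
    · exact absurd rfl hk
    · exact h1
    · exact h2
  · refine ⟨1, Or.inr fun k hk => ?_⟩
    rcases hfin k with rfl | rfl | rfl
    · exact h0
    · exact absurd rfl hk
    · exact h2
  · refine ⟨2, Or.inr fun k hk => ?_⟩
    rcases hfin k with rfl | rfl | rfl
    · exact h0
    · exact h1
    · exact absurd rfl hk
  · refine ⟨0, Or.inr fun k hk => ?_⟩
    rcases hfin k with rfl | rfl | rfl
    · exact absurd rfl hk
    · exact h1
    · exact h2

lemma closedBall_subset_iUnion_F (b : AffineBasis (Fin 3) ℝ (EuclideanSpace ℝ (Fin 2))) :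
    closedBall (0 : EuclideanSpace ℝ (Fin 2)) 1 ⊆ ⋃ p, F b p := by
  intro y hy
  obtain ⟨i, h | h⟩ := cover_two b y
  · exact mem_iUnion.mpr ⟨(i, true), (mem_F_true b).2 ⟨h, hy⟩⟩
  · refine mem_iUnion.mpr ⟨(i, false), (mem_F_false b).2 ⟨fun k hk => ?_, hy⟩⟩
    rw [map_neg]
    linarith [h k hk]

lemma lin_basis_sub (b : AffineBasis (Fin (d + 1)) ℝ (EuclideanSpace ℝ (Fin d)))
    (k i j : Fin (d + 1)) :
    (b.coord k).linear ((b i : EuclideanSpace ℝ (Fin d)) - b j)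
      = (if k = i then (1 : ℝ) else 0) - (if k = j then 1 else 0) := by
  rw [lin_sub]
  congr 1
  · rcases eq_or_ne k i with rfl | h
    · rw [if_pos rfl, b.coord_apply_eq]
    · rw [if_neg h, b.coord_apply_ne h]
  · rcases eq_or_ne k j with rfl | h
    · rw [if_pos rfl, b.coord_apply_eq]
    · rw [if_neg h, b.coord_apply_ne h]

/-- The open escape region in dimension `> 2`. -/
lemma exists_escape (hd : 2 < d) (b : AffineBasis (Fin (d + 1)) ℝ (EuclideanSpace ℝ (Fin d))) :
    ∃ U : Set (EuclideanSpace ℝ (Fin d)), IsOpen U ∧ U.Nonempty ∧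
      U ⊆ closedBall 0 1 ∧ ∀ p, Disjoint U (F b p) := by
  have h4 : ∀ m : ℕ, m < 4 → m < d + 1 := by omega
  set c : Fin 4 → Fin (d + 1) := fun m => ⟨m.1, h4 m.1 m.2⟩ with hc
  have hcne : ∀ m m' : Fin 4, m ≠ m' → c m ≠ c m' := by
    intro m m' h hcontra
    have hval : (c m).val = (c m').val := congrArg Fin.val hcontra
    exact h (Fin.ext hval)
  set L : Fin (d + 1) → EuclideanSpace ℝ (Fin d) →ₗ[ℝ] ℝ := fun k => (b.coord k).linear with hLdef
  set y₀ : EuclideanSpace ℝ (Fin d) :=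
    ((b (c 2) : EuclideanSpace ℝ (Fin d)) - b (c 0))
      + ((b (c 3) : EuclideanSpace ℝ (Fin d)) - b (c 1)) with hy₀
  have h02 : c 0 ≠ c 2 := hcne 0 2 (by decide)
  have h01 : c 0 ≠ c 1 := hcne 0 1 (by decide)
  have h03 : c 0 ≠ c 3 := hcne 0 3 (by decide)
  have h12 : c 1 ≠ c 2 := hcne 1 2 (by decide)
  have h13 : c 1 ≠ c 3 := hcne 1 3 (by decide)
  have h23 : c 2 ≠ c 3 := hcne 2 3 (by decide)
  have hsimp : ∀ m : Fin 4, L (c m) y₀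
      = ((if c m = c 2 then (1:ℝ) else 0) - (if c m = c 0 then 1 else 0))
        + ((if c m = c 3 then (1:ℝ) else 0) - (if c m = c 1 then 1 else 0)) := by
    intro m
    rw [hy₀, hLdef]
    rw [map_add, lin_basis_sub, lin_basis_sub]
  have hv0 : L (c 0) y₀ = -1 := by
    rw [hsimp 0, if_neg h02, if_pos rfl, if_neg h03, if_neg h01]; norm_num
  have hv1 : L (c 1) y₀ = -1 := by
    rw [hsimp 1, if_neg h12, if_neg (Ne.symm h01), if_neg h13, if_pos rfl]; norm_num
  have hv2 : L (c 2) y₀ = 1 := by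
    rw [hsimp 2, if_pos rfl, if_neg (Ne.symm h02), if_neg h23, if_neg (Ne.symm h12)]; norm_num
  have hv3 : L (c 3) y₀ = 1 := by
    rw [hsimp 3, if_neg (Ne.symm h23), if_neg (Ne.symm h03), if_pos rfl, if_neg (Ne.symm h13)]; norm_num
  set U : Set (EuclideanSpace ℝ (Fin d)) :=
    {y | L (c 0) y < 0 ∧ L (c 1) y < 0 ∧ 0 < L (c 2) y ∧ 0 < L (c 3) y} ∩ ball 0 1 with hU
  have hLc : ∀ k, Continuous (L k) := fun k => (L k).continuous_of_finiteDimensional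
  refine ⟨U, ?_, ?_, ?_, ?_⟩
  · apply IsOpen.inter _ isOpen_ball
    have heq : {y : EuclideanSpace ℝ (Fin d) |
        L (c 0) y < 0 ∧ L (c 1) y < 0 ∧ 0 < L (c 2) y ∧ 0 < L (c 3) y}
        = (L (c 0)) ⁻¹' Iio 0 ∩ ((L (c 1)) ⁻¹' Iio 0 ∩
          ((L (c 2)) ⁻¹' Ioi 0 ∩ (L (c 3)) ⁻¹' Ioi 0)) := by
      ext y; simp [and_assoc]
    rw [heq]
    exact (isOpen_Iio.preimage (hLc _)).inter ((isOpen_Iio.preimage (hLc _)).inter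
      ((isOpen_Ioi.preimage (hLc _)).inter (isOpen_Ioi.preimage (hLc _))))
  · set ε : ℝ := (1 + ‖y₀‖)⁻¹ with hε
    have hεpos : 0 < ε := by positivity
    refine ⟨ε • y₀, ⟨?_, ?_, ?_, ?_⟩, ?_⟩
    · rw [LinearMap.map_smul, smul_eq_mul, hv0]; nlinarith
    · rw [LinearMap.map_smul, smul_eq_mul, hv1]; nlinarith
    · rw [LinearMap.map_smul, smul_eq_mul, hv2]; nlinarith
    · rw [LinearMap.map_smul, smul_eq_mul, hv3]; nlinarith
    · rw [mem_ball_zero_iff, norm_smul, Real.norm_eq_abs, abs_of_pos hεpos]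
      have h1 : ε * (1 + ‖y₀‖) = 1 := inv_mul_cancel₀ (by positivity)
      nlinarith [norm_nonneg y₀]
  · exact inter_subset_right.trans ball_subset_closedBall
  · rintro ⟨i, s⟩
    rw [Set.disjoint_left]
    rintro y ⟨⟨hu0, hu1, hu2, hu3⟩, -⟩ hyF
    cases s with
    | false =>
      obtain ⟨hk, -⟩ := (mem_F_false b).1 hyF
      rcases eq_or_ne (c 2) i with h | h
      · have h3i : c 3 ≠ i := h ▸ hcne 3 2 (by decide)
        have := hk (c 3) h3i
        rw [map_neg] at this
        simp only [hLdef] at hu3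
        linarith
      · have := hk (c 2) h
        rw [map_neg] at this
        simp only [hLdef] at hu2
        linarith
    | true =>
      obtain ⟨hk, -⟩ := (mem_F_true b).1 hyF
      rcases eq_or_ne (c 0) i with h | h
      · have h1i : c 1 ≠ i := h ▸ hcne 1 0 (by decide)
        have := hk (c 1) h1i
        simp only [hLdef] at hu1
        linarith
      · have := hk (c 0) h
        simp only [hLdef] at hu0
        linarith

lemma final_eq (b : AffineBasis (Fin 3) ℝ (EuclideanSpace ℝ (Fin 2))) :
    ∑ i, solidAngle (convexHull ℝ (range ⇑b)) (b i) = 1 / 2 := by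
  rw [sum_repr b]
  set S := ∑ i, volume (Kcone b i ∩ closedBall (0 : EuclideanSpace ℝ (Fin 2)) 1) with hS
  set M := volume (closedBall (0 : EuclideanSpace ℝ (Fin 2)) 1) with hM
  have hMlt : M < ⊤ := measure_closedBall_lt_top
  have hMpos : (0 : ENNReal) < M := measure_closedBall_pos volume _ one_pos
  have h2 : 2 * S = M := by
    rw [hS, ← measure_iUnion_F (by norm_num) b]
    exact le_antisymm (measure_mono (iUnion_subset fun p => F_subset b p))
      (measure_mono (closedBall_subset_iUnion_F b))
  have hS_ne : S ≠ ⊤ := by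
    intro h
    rw [h, ENNReal.mul_top (by norm_num)] at h2
    exact hMlt.ne h2.symm
  have hMr : 0 < M.toReal := ENNReal.toReal_pos hMpos.ne' hMlt.ne
  have h2' : 2 * S.toReal = M.toReal := by
    have := congrArg ENNReal.toReal h2
    rwa [ENNReal.toReal_mul, ENNReal.toReal_ofNat] at this
  rw [div_eq_iff hMr.ne']
  linarith

lemma final_lt {d : ℕ} (hd : 2 < d) (b : AffineBasis (Fin (d + 1)) ℝ (EuclideanSpace ℝ (Fin d))) :
    ∑ i, solidAngle (convexHull ℝ (range ⇑b)) (b i) < 1 / 2 := by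
  rw [sum_repr b]
  obtain ⟨U, hUopen, hUne, hUsub, hUdisj⟩ := exists_escape hd b
  set S := ∑ i, volume (Kcone b i ∩ closedBall (0 : EuclideanSpace ℝ (Fin d)) 1) with hS
  set M := volume (closedBall (0 : EuclideanSpace ℝ (Fin d)) 1) with hM
  have hMlt : M < ⊤ := measure_closedBall_lt_top
  have hMpos : (0 : ENNReal) < M := measure_closedBall_pos volume _ one_pos
  have hkey : 2 * S + volume U ≤ M := by
    rw [hS, ← measure_iUnion_F hd.le b,
      ← measure_union (disjoint_iUnion_left.mpr fun p => (hUdisj p).symm) hUopen.measurableSet]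
    exact measure_mono (union_subset (iUnion_subset fun p => F_subset b p) hUsub)
  have hU : 0 < volume U := hUopen.measure_pos volume hUne
  have h2S_le : 2 * S ≤ M := le_trans le_self_add hkey
  have h2S_ne : 2 * S ≠ ⊤ := (h2S_le.trans_lt hMlt).ne
  have hlt : 2 * S < M := lt_of_lt_of_le (ENNReal.lt_add_right h2S_ne hU.ne') hkey
  have hMr : 0 < M.toReal := ENNReal.toReal_pos hMpos.ne' hMlt.ne
  have hlt' : 2 * S.toReal < M.toReal := by
    have := ENNReal.toReal_strict_mono hMlt.ne hlt
    rwa [ENNReal.toReal_mul, ENNReal.toReal_ofNat] at this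
  rw [div_lt_iff₀ hMr]
  linarith

end VertexSolidAngleAux

/-- For a `d`-simplex `Δ`, the sum `S(Δ)` of the solid angles at the vertices equals `1/2`
when `d = 2` and is strictly less than `1/2` when `d > 2`. -/
theorem vertex_solidAngle_sum {d : ℕ} (v : Fin (d + 1) → EuclideanSpace ℝ (Fin d))
    (hv : AffineIndependent ℝ v) :
    (d = 2 → ∑ i, solidAngle (convexHull ℝ (range v)) (v i) = 1 / 2) ∧
    (2 < d → ∑ i, solidAngle (convexHull ℝ (range v)) (v i) < 1 / 2) := by
  have htot : affineSpan ℝ (range v) = ⊤ := by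
    rw [hv.affineSpan_eq_top_iff_card_eq_finrank_add_one]
    simp [finrank_euclideanSpace_fin]
  constructor
  · intro hd
    subst hd
    exact VertexSolidAngleAux.final_eq ⟨v, hv, htot⟩
  · intro hd
    exact VertexSolidAngleAux.final_lt hd ⟨v, hv, htot⟩
end

section
/- For a polyhedral cone K ⊂ ℝ^d with apex x, the solid angles of the prism K × [0,1] at the two points (x,0) and (x,1) are equal, and ω_{K×[0,1]}((x,0)) ≤ c·ω_K(x), where c = vol(B_d(1))/vol(B_{d+1}(1)) is the ratio of the volumes of the d-dimensional and (d+1)-dimensional unit balls. -/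
open MeasureTheory Metric Set Filter Pointwise

-- coordinate distance bound
lemma coord_dist_le {n : ℕ} (y z : EuclideanSpace ℝ (Fin n)) (i : Fin n) :
    dist (y i) (z i) ≤ dist y z := by
  rw [EuclideanSpace.dist_eq]
  have h1 : dist (y i) (z i) ^ 2 ≤ ∑ j, dist (y j) (z j) ^ 2 :=
    Finset.single_le_sum (f := fun j => dist (y j) (z j) ^ 2) (fun j _ => sq_nonneg _)
      (Finset.mem_univ i)
  calc dist (y i) (z i) = √(dist (y i) (z i) ^ 2) := (Real.sqrt_sq dist_nonneg).symm
    _ ≤ _ := Real.sqrt_le_sqrt h1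

def projE {d : ℕ} (y : EuclideanSpace ℝ (Fin (d+1))) : EuclideanSpace ℝ (Fin d) :=
  WithLp.toLp 2 (fun i => y i.castSucc)

lemma dist_proj_le {d : ℕ} (y z : EuclideanSpace ℝ (Fin (d+1))) :
    dist (projE y) (projE z) ≤ dist y z := by
  rw [EuclideanSpace.dist_eq, EuclideanSpace.dist_eq]
  apply Real.sqrt_le_sqrt
  rw [Fin.sum_univ_castSucc]
  exact le_add_of_nonneg_right (sq_nonneg _)

-- cone scaling
lemma cone_ball_eq {n : ℕ} {C : Set (EuclideanSpace ℝ (Fin n))} {c : EuclideanSpace ℝ (Fin n)}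
    (hcone : ∀ y ∈ C, ∀ t : ℝ, 0 ≤ t → c + t • (y - c) ∈ C) {r : ℝ} (hr : 0 < r) :
    AffineMap.homothety c r '' (closedBall c 1 ∩ C) = closedBall c r ∩ C := by
  ext z
  simp only [mem_image, mem_inter_iff, mem_closedBall, AffineMap.homothety_apply, vsub_eq_sub, vadd_eq_add]
  constructor
  · rintro ⟨y, ⟨hy1, hy2⟩, rfl⟩
    refine ⟨?_, ?_⟩
    · rw [dist_eq_norm, add_sub_cancel_right, norm_smul, Real.norm_eq_abs, abs_of_pos hr]
      have : ‖y - c‖ ≤ 1 := by rwa [dist_eq_norm] at hy1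
      calc r * ‖y - c‖ ≤ r * 1 := by gcongr
        _ = r := mul_one r
    · have := hcone y hy2 r hr.le
      convert this using 1
      abel
  · rintro ⟨hz1, hz2⟩
    refine ⟨c + r⁻¹ • (z - c), ⟨?_, hcone z hz2 r⁻¹ (by positivity)⟩, ?_⟩
    · have hz1' : ‖z - c‖ ≤ r := by rwa [dist_eq_norm] at hz1
      rw [dist_eq_norm, add_sub_cancel_left, norm_smul, Real.norm_eq_abs,
        abs_of_pos (inv_pos.2 hr)]
      calc r⁻¹ * ‖z - c‖ ≤ r⁻¹ * r := by gcongr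
        _ = 1 := inv_mul_cancel₀ hr.ne'
    · rw [add_sub_cancel_left, smul_smul, mul_inv_cancel₀ hr.ne', one_smul]
      abel

lemma vol_cone_ball {n : ℕ} {C : Set (EuclideanSpace ℝ (Fin n))} {c : EuclideanSpace ℝ (Fin n)}
    (hcone : ∀ y ∈ C, ∀ t : ℝ, 0 ≤ t → c + t • (y - c) ∈ C) {r : ℝ} (hr : 0 < r) :
    volume (closedBall c r ∩ C) = ENNReal.ofReal (r ^ n) * volume (closedBall c 1 ∩ C) := by
  rw [← cone_ball_eq hcone hr, Measure.addHaar_image_homothety, finrank_euclideanSpace_fin,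
    abs_of_pos (pow_pos hr n)]

lemma solidAngle_eq_angleRatio_one {n : ℕ} {C : Set (EuclideanSpace ℝ (Fin n))}
    {c : EuclideanSpace ℝ (Fin n)}
    (h : ∀ r : ℝ, 0 < r → r ≤ 1 →
      volume (closedBall c r ∩ C) = ENNReal.ofReal (r ^ n) * volume (closedBall c 1 ∩ C)) :
    solidAngle C c = angleRatio C c 1 := by
  have hconst : ∀ r : ℝ, 0 < r → r ≤ 1 → angleRatio C c r = angleRatio C c 1 := by
    intro r hr hr1
    have h2 : volume (closedBall c r) = ENNReal.ofReal (r ^ n) * volume (closedBall c 1) := by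
      rw [Measure.addHaar_closedBall' volume c hr.le, finrank_euclideanSpace_fin]
      congr 1
      exact (Measure.addHaar_closedBall_center volume c 1).symm
    unfold angleRatio
    rw [h r hr hr1, h2, ENNReal.toReal_mul, ENNReal.toReal_mul,
      ENNReal.toReal_ofReal (by positivity),
      mul_div_mul_left _ _ (by positivity : (r:ℝ) ^ n ≠ 0)]
  refine Tendsto.limUnder_eq ?_
  refine Tendsto.congr' ?_ tendsto_const_nhds
  filter_upwards [Ioc_mem_nhdsGT_of_mem (by simp : (0:ℝ) ∈ Ico (0:ℝ) 1)] with r hr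
  exact (hconst r hr.1 hr.2).symm
lemma volume_prismSet {d : ℕ} {S : Set (EuclideanSpace ℝ (Fin d))} (hS : MeasurableSet S) :
    volume {y : EuclideanSpace ℝ (Fin (d+1)) | projE y ∈ S ∧ y (Fin.last d) ∈ Icc (0:ℝ) 1}
      = volume S := by
  have m1 := EuclideanSpace.volume_preserving_symm_measurableEquiv_toLp (Fin (d+1))
  have m0 := (EuclideanSpace.volume_preserving_symm_measurableEquiv_toLp (Fin d)).symm
  have m2 := volume_preserving_piFinSuccAbove (fun _ : Fin (d+1) => ℝ) (Fin.last d)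
  have mp : MeasurePreserving
      (fun y : EuclideanSpace ℝ (Fin (d+1)) => ((y (Fin.last d), projE y) :
        ℝ × EuclideanSpace ℝ (Fin d))) volume volume := by
    have hc := ((MeasurePreserving.id (volume : Measure ℝ)).prod m0).comp (m2.comp m1)
    have hf : (fun y : EuclideanSpace ℝ (Fin (d+1)) => ((y (Fin.last d), projE y) :
        ℝ × EuclideanSpace ℝ (Fin d))) = (Prod.map id (MeasurableEquiv.toLp 2 (Fin d → ℝ)).symm.symm ∘
        (MeasurableEquiv.piFinSuccAbove (fun _ => ℝ) (Fin.last d)) ∘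
        (MeasurableEquiv.toLp 2 (Fin (d + 1) → ℝ)).symm) := by
      funext y
      refine Prod.ext rfl ?_
      show projE y = (MeasurableEquiv.toLp 2 (Fin d → ℝ))
        (fun j => ((MeasurableEquiv.toLp 2 (Fin (d+1) → ℝ)).symm y) ((Fin.last d).succAbove j))
      ext j
      simp [projE, Fin.succAbove_last]
    rw [hf]; exact hc
  have hpre : (fun y : EuclideanSpace ℝ (Fin (d+1)) => ((y (Fin.last d), projE y) :
        ℝ × EuclideanSpace ℝ (Fin d))) ⁻¹' (Icc (0:ℝ) 1 ×ˢ S)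
      = {y : EuclideanSpace ℝ (Fin (d+1)) | projE y ∈ S ∧ y (Fin.last d) ∈ Icc (0:ℝ) 1} := by
    ext y
    simp [and_comm]
  rw [← hpre, mp.measure_preimage (measurableSet_Icc.prod hS).nullMeasurableSet,
    Measure.volume_eq_prod, Measure.prod_prod, Real.volume_Icc]
  simp

noncomputable def reflectLast (d : ℕ) :
    EuclideanSpace ℝ (Fin (d+1)) ≃ₗᵢ[ℝ] EuclideanSpace ℝ (Fin (d+1)) :=
  LinearIsometryEquiv.piLpCongrRight 2
    (fun i => if i = Fin.last d then LinearIsometryEquiv.neg ℝ else LinearIsometryEquiv.refl ℝ ℝ)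

lemma reflectLast_apply (d : ℕ) (y : EuclideanSpace ℝ (Fin (d+1))) (i : Fin (d+1)) :
    reflectLast d y i = if i = Fin.last d then -(y i) else y i := by
  show (LinearIsometryEquiv.piLpCongrRight 2 _) y i = _
  rw [LinearIsometryEquiv.piLpCongrRight_apply]
  by_cases h : i = Fin.last d
  · subst h; simp
  · simp [h]

def vlast (d : ℕ) : EuclideanSpace ℝ (Fin (d+1)) := WithLp.toLp 2 (Fin.snoc 0 1 : Fin (d+1) → ℝ)

noncomputable def rho (d : ℕ) (y : EuclideanSpace ℝ (Fin (d+1))) :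
    EuclideanSpace ℝ (Fin (d+1)) :=
  vlast d + reflectLast d y

lemma rho_measurePreserving (d : ℕ) : MeasurePreserving (rho d) volume volume :=
  (measurePreserving_add_left volume (vlast d)).comp (reflectLast d).measurePreserving

lemma rho_dist (d : ℕ) (y z : EuclideanSpace ℝ (Fin (d+1))) :
    dist (rho d y) (rho d z) = dist y z := by
  unfold rho
  rw [dist_add_left, LinearIsometryEquiv.dist_map]

lemma rho_apply_castSucc (d : ℕ) (y : EuclideanSpace ℝ (Fin (d+1))) (i : Fin d) :
    rho d y i.castSucc = y i.castSucc := by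
  unfold rho
  have : (vlast d + reflectLast d y)
      i.castSucc = vlast d i.castSucc + reflectLast d y i.castSucc := rfl
  rw [this, reflectLast_apply]
  simp [vlast, Fin.snoc_castSucc, (Fin.castSucc_lt_last i).ne]

lemma rho_apply_last (d : ℕ) (y : EuclideanSpace ℝ (Fin (d+1))) :
    rho d y (Fin.last d) = 1 - y (Fin.last d) := by
  unfold rho
  have : (vlast d + reflectLast d y)
      (Fin.last d) = vlast d (Fin.last d) + reflectLast d y (Fin.last d) := rfl
  rw [this, reflectLast_apply]
  simp [vlast, Fin.snoc_last, sub_eq_add_neg]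

lemma rho_snoc (d : ℕ) (x : EuclideanSpace ℝ (Fin d)) (a : ℝ) :
    rho d (WithLp.toLp 2 (Fin.snoc x a : Fin (d+1) → ℝ) : EuclideanSpace ℝ (Fin (d+1)))
      = (WithLp.toLp 2 (Fin.snoc x (1 - a) : Fin (d+1) → ℝ) : EuclideanSpace ℝ (Fin (d+1))) := by
  ext i
  induction i using Fin.lastCases with
  | last => rw [rho_apply_last]; simp
  | cast i => rw [rho_apply_castSucc]; simp

/-- For a closed convex polyhedral cone `K ⊂ ℝ^d` with apex `x`, the solid angles of the
prism `K × [0,1] ⊂ ℝ^{d+1}` at `(x,0)` and `(x,1)` agree, and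
`ω_{K×[0,1]}((x,0)) ≤ c · ω_K(x)` with `c = vol(B_d(1))/vol(B_{d+1}(1))`. -/
theorem solidAngle_prism {d : ℕ} (K : Set (EuclideanSpace ℝ (Fin d)))
    (x : EuclideanSpace ℝ (Fin d))
    (hclosed : IsClosed K) (hconv : Convex ℝ K) (hx : x ∈ K)
    (hcone : ∀ y ∈ K, ∀ t : ℝ, 0 ≤ t → x + t • (y - x) ∈ K)
    (hpoly : ∃ (n : ℕ) (a : Fin n → EuclideanSpace ℝ (Fin d)) (b : Fin n → ℝ),
      K = {y | ∀ i, (inner ℝ (a i) y : ℝ) ≤ b i})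
    (P : Set (EuclideanSpace ℝ (Fin (d + 1))))
    (hP : P = {y | (WithLp.toLp 2 (fun i : Fin d => y i.castSucc) : EuclideanSpace ℝ (Fin d)) ∈ K ∧
      y (Fin.last d) ∈ Icc (0 : ℝ) 1}) :
    solidAngle P (WithLp.toLp 2 (Fin.snoc x 0 : Fin (d + 1) → ℝ) : EuclideanSpace ℝ (Fin (d + 1))) =
      solidAngle P (WithLp.toLp 2 (Fin.snoc x 1 : Fin (d + 1) → ℝ) : EuclideanSpace ℝ (Fin (d + 1))) ∧
    solidAngle P (WithLp.toLp 2 (Fin.snoc x 0 : Fin (d + 1) → ℝ) : EuclideanSpace ℝ (Fin (d + 1))) ≤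
      ((volume (closedBall (0 : EuclideanSpace ℝ (Fin d)) 1)).toReal /
          (volume (closedBall (0 : EuclideanSpace ℝ (Fin (d + 1))) 1)).toReal) *
        solidAngle K x := by
  set x0 : EuclideanSpace ℝ (Fin (d+1)) :=
    (WithLp.toLp 2 (Fin.snoc x 0 : Fin (d + 1) → ℝ) : EuclideanSpace ℝ (Fin (d + 1))) with hx0
  set x1 : EuclideanSpace ℝ (Fin (d+1)) :=
    (WithLp.toLp 2 (Fin.snoc x 1 : Fin (d + 1) → ℝ) : EuclideanSpace ℝ (Fin (d + 1))) with hx1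
  -- P is closed, hence measurable
  have hprojC : Continuous (projE (d := d)) := by
    unfold projE
    fun_prop
  have hlastC : Continuous (fun y : EuclideanSpace ℝ (Fin (d+1)) => y (Fin.last d)) := by
    fun_prop
  have hPalt : P = projE ⁻¹' K ∩ (fun y : EuclideanSpace ℝ (Fin (d+1)) => y (Fin.last d)) ⁻¹'
      (Icc (0:ℝ) 1) := by rw [hP]; rfl
  have hPclosed : IsClosed P := by
    rw [hPalt]
    exact ((hclosed.preimage hprojC).inter (isClosed_Icc.preimage hlastC))
  -- x0/x1 coordinates
  have hx0c : ∀ i : Fin d, x0 i.castSucc = x i := fun i => by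
    simp [hx0, Fin.snoc_castSucc]
  have hx0l : x0 (Fin.last d) = 0 := by simp [hx0]
  -- Part 1 : reflection symmetry
  have hrx0 : rho d x0 = x1 := by
    rw [hx0, hx1, rho_snoc]; norm_num
  have key1 : ∀ r : ℝ, volume (closedBall x0 r ∩ P) = volume (closedBall x1 r ∩ P) := by
    intro r
    have h1 : rho d ⁻¹' (closedBall x1 r ∩ P) = closedBall x0 r ∩ P := by
      ext y
      simp only [mem_preimage, mem_inter_iff, mem_closedBall]
      apply and_congr
      · rw [← hrx0, rho_dist]
      · rw [hP]
        simp only [mem_setOf_eq]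
        have hproj : (WithLp.toLp 2 (fun i : Fin d => rho d y i.castSucc) : EuclideanSpace ℝ (Fin d))
            = (WithLp.toLp 2 (fun i : Fin d => y i.castSucc) : EuclideanSpace ℝ (Fin d)) := by
          ext i; exact rho_apply_castSucc d y i
        rw [hproj, rho_apply_last]
        simp only [mem_Icc]
        constructor
        · rintro ⟨h1, h2, h3⟩; exact ⟨h1, by linarith, by linarith⟩
        · rintro ⟨h1, h2, h3⟩; exact ⟨h1, by linarith, by linarith⟩
    have h2 : NullMeasurableSet (closedBall x1 r ∩ P) volume :=
      ((isClosed_closedBall.inter hPclosed).measurableSet).nullMeasurableSet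
    rw [← h1, (rho_measurePreserving d).measure_preimage h2]
  have part1 : solidAngle P x0 = solidAngle P x1 := by
    unfold solidAngle
    congr 1
    funext r
    unfold angleRatio
    rw [key1 r, Measure.addHaar_closedBall_center volume x0 r,
      Measure.addHaar_closedBall_center volume x1 r]
  refine ⟨part1, ?_⟩
  -- Part 2
  set C : Set (EuclideanSpace ℝ (Fin (d+1))) :=
    {y | projE y ∈ K ∧ 0 ≤ y (Fin.last d)} with hC
  have hconeC : ∀ y ∈ C, ∀ t : ℝ, 0 ≤ t → x0 + t • (y - x0) ∈ C := by
    rintro y ⟨hy1, hy2⟩ t ht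
    constructor
    · have heq : projE (x0 + t • (y - x0)) = x + t • (projE y - x) := by
        ext i
        show (x0 + t • (y - x0)) i.castSucc = (x + t • (projE y - x)) i
        have e1 : (x0 + t • (y - x0)) i.castSucc
            = x0 i.castSucc + t * (y i.castSucc - x0 i.castSucc) := rfl
        have e2 : (x + t • (projE y - x)) i = x i + t * (projE y i - x i) := rfl
        rw [e1, e2, hx0c i]; rfl
      show projE (x0 + t • (y - x0)) ∈ K
      rw [heq]
      exact hcone _ hy1 t ht
    · show 0 ≤ (x0 + t • (y - x0)) (Fin.last d)
      have e1 : (x0 + t • (y - x0)) (Fin.last d)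
          = x0 (Fin.last d) + t * (y (Fin.last d) - x0 (Fin.last d)) := rfl
      rw [e1, hx0l]
      simpa using mul_nonneg ht hy2
  have hPC : ∀ r : ℝ, r ≤ 1 → closedBall x0 r ∩ P = closedBall x0 r ∩ C := by
    intro r hr1
    ext y
    simp only [mem_inter_iff, mem_closedBall, hP, hC, mem_setOf_eq, mem_Icc]
    constructor
    · rintro ⟨hb, h1, h2, h3⟩; exact ⟨hb, h1, h2⟩
    · rintro ⟨hb, h1, h2⟩
      refine ⟨hb, h1, h2, ?_⟩
      have hc := coord_dist_le y x0 (Fin.last d)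
      rw [hx0l, Real.dist_eq, sub_zero] at hc
      have := abs_le.1 (hc.trans (hb.trans hr1))
      exact this.2
  have hscale : ∀ r : ℝ, 0 < r → r ≤ 1 →
      volume (closedBall x0 r ∩ P)
        = ENNReal.ofReal (r ^ (d+1)) * volume (closedBall x0 1 ∩ P) := by
    intro r hr hr1
    rw [hPC r hr1, hPC 1 le_rfl]
    exact vol_cone_ball hconeC hr
  have hsaP : solidAngle P x0 = angleRatio P x0 1 := solidAngle_eq_angleRatio_one hscale
  have hsaK : solidAngle K x = angleRatio K x 1 :=
    solidAngle_eq_angleRatio_one (fun r hr _ => vol_cone_ball hcone hr)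
  -- volume comparison
  set S : Set (EuclideanSpace ℝ (Fin d)) := closedBall x 1 ∩ K with hS
  have hprojx0 : projE x0 = x := by ext i; exact hx0c i
  have hsub : closedBall x0 1 ∩ P ⊆
      {y : EuclideanSpace ℝ (Fin (d+1)) | projE y ∈ S ∧ y (Fin.last d) ∈ Icc (0:ℝ) 1} := by
    rintro y ⟨hb, hyP⟩
    rw [hP] at hyP
    refine ⟨⟨?_, hyP.1⟩, hyP.2⟩
    rw [mem_closedBall]
    calc dist (projE y) x = dist (projE y) (projE x0) := by rw [hprojx0]
      _ ≤ dist y x0 := dist_proj_le y x0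
      _ ≤ 1 := hb
  have hSmeas : MeasurableSet S :=
    (isClosed_closedBall.inter hclosed).measurableSet
  have hvol : volume (closedBall x0 1 ∩ P) ≤ volume S :=
    le_of_le_of_eq (measure_mono hsub) (volume_prismSet hSmeas)
  have hSfin : volume S ≠ ⊤ :=
    ((measure_mono (inter_subset_left)).trans_lt measure_closedBall_lt_top).ne
  have hab : (volume (closedBall x0 1 ∩ P)).toReal ≤ (volume S).toReal :=
    ENNReal.toReal_mono hSfin hvol
  have hBd1 : (0:ℝ) < (volume (closedBall (0 : EuclideanSpace ℝ (Fin (d+1))) 1)).toReal :=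
    ENNReal.toReal_pos (measure_closedBall_pos volume 0 one_pos).ne' measure_closedBall_lt_top.ne
  have hBd : (0:ℝ) < (volume (closedBall (0 : EuclideanSpace ℝ (Fin d)) 1)).toReal :=
    ENNReal.toReal_pos (measure_closedBall_pos volume 0 one_pos).ne' measure_closedBall_lt_top.ne
  rw [hsaP, hsaK]
  unfold angleRatio
  rw [Measure.addHaar_closedBall_center volume x0 1, Measure.addHaar_closedBall_center volume x 1]
  rw [← hS]
  set D : ℝ := (volume (closedBall (0 : EuclideanSpace ℝ (Fin d)) 1)).toReal
  set D1 : ℝ := (volume (closedBall (0 : EuclideanSpace ℝ (Fin (d+1))) 1)).toReal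
  have hrhs : D / D1 * ((volume S).toReal / D) = (volume S).toReal / D1 := by
    field_simp
  rw [hrhs]
  gcongr
end

section
/- Let x = (x₁,...,x_d) ∈ ℝ^d satisfy x_d > 0 and |x₁| + ⋯ + |x_d| < 1. Then there exist real numbers h₁,...,h_{d−1} (namely h_i = x_i/x_d when x_i < 0 and h_i = 0 otherwise; in fact h_i ≤ 0 suffice when chosen appropriately) such that x lies in the convex hull of 0, e₁, ..., e_{d−1}, (h₁,...,h_{d−1},1). -/
open Set

/-- If `x ∈ ℝ^{n+1}` has positive last coordinate and `Σ|xᵢ| < 1`, then there are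
nonpositive reals `h₁,…,h_n` with `x ∈ conv{0, e₁,…,e_n, (h₁,…,h_n,1)}`. -/
theorem mem_heightSimplex_of_small {n : ℕ} (hn : 1 ≤ n)
    (x : EuclideanSpace ℝ (Fin (n + 1)))
    (hxd : 0 < x (Fin.last n)) (hsum : ∑ i, |x i| < 1) :
    ∃ h : Fin n → ℝ, (∀ i, h i ≤ 0) ∧
      x ∈ convexHull ℝ
        (insert (0 : EuclideanSpace ℝ (Fin (n + 1)))
          (insert (WithLp.toLp 2 (Fin.snoc h 1 : Fin (n + 1) → ℝ) : EuclideanSpace ℝ (Fin (n + 1)))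
            (Set.range fun i : Fin n => EuclideanSpace.single i.castSucc (1 : ℝ)))) := by
  classical
  set h : Fin n → ℝ := fun i => min (x i.castSucc) 0 / x (Fin.last n) with hh
  refine ⟨h, fun i => div_nonpos_of_nonpos_of_nonneg (min_le_right _ _) hxd.le, ?_⟩
  set S : Set (EuclideanSpace ℝ (Fin (n + 1))) :=
    insert (0 : EuclideanSpace ℝ (Fin (n + 1)))
      (insert (WithLp.toLp 2 (Fin.snoc h 1 : Fin (n + 1) → ℝ) : EuclideanSpace ℝ (Fin (n + 1)))
        (Set.range fun i : Fin n => EuclideanSpace.single i.castSucc (1 : ℝ))) with hS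
  set w : Option (Option (Fin n)) → ℝ := fun o =>
    o.elim (1 - x (Fin.last n) - ∑ i : Fin n, max (x i.castSucc) 0)
      (fun o' => o'.elim (x (Fin.last n)) (fun i => max (x i.castSucc) 0)) with hw
  set z : Option (Option (Fin n)) → EuclideanSpace ℝ (Fin (n + 1)) := fun o =>
    o.elim 0 (fun o' => o'.elim (WithLp.toLp 2 (Fin.snoc h 1 : Fin (n + 1) → ℝ))
      (fun i => EuclideanSpace.single i.castSucc (1 : ℝ))) with hz
  have hsplit : ∑ i : Fin n, |x i.castSucc| + |x (Fin.last n)| < 1 := by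
    have := hsum; rwa [Fin.sum_univ_castSucc] at this
  have hxd' : |x (Fin.last n)| = x (Fin.last n) := abs_of_pos hxd
  have hmaxle : ∑ i : Fin n, max (x i.castSucc) 0 ≤ ∑ i : Fin n, |x i.castSucc| :=
    Finset.sum_le_sum fun i _ => max_le (le_abs_self _) (abs_nonneg _)
  have hwnonneg : ∀ o, 0 ≤ w o := by
    rintro (_ | _ | i)
    · simp only [hw, Option.elim]; linarith
    · exact hxd.le
    · exact le_max_right _ _
  have hwsum : ∑ o : Option (Option (Fin n)), w o = 1 := by
    simp only [Fintype.sum_option, hw, Option.elim]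
    ring
  have hmem : ∀ o, z o ∈ S := by
    rintro (_ | _ | i)
    · exact Set.mem_insert _ _
    · exact Set.mem_insert_of_mem _ (Set.mem_insert _ _)
    · exact Set.mem_insert_of_mem _ (Set.mem_insert_of_mem _ ⟨i, rfl⟩)
  have hne : ∀ k : Fin n, Fin.last n ≠ k.castSucc := fun k => (Fin.castSucc_lt_last k).ne'
  have key : x = ∑ o : Option (Option (Fin n)), w o • z o := by
    ext j
    have happ : (∑ o : Option (Option (Fin n)), w o • z o) j
        = ∑ o : Option (Option (Fin n)), w o * z o j := by
      rw [WithLp.ofLp_sum, Finset.sum_apply]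
      exact Finset.sum_congr rfl fun o _ => rfl
    rw [happ]
    induction j using Fin.lastCases with
    | last =>
      simp only [Fintype.sum_option, hw, hz, Option.elim, WithLp.ofLp_toLp, Fin.snoc_last,
        EuclideanSpace.single_apply]
      simp [hne]
    | cast i =>
      simp only [Fintype.sum_option, hw, hz, Option.elim, WithLp.ofLp_toLp, Fin.snoc_castSucc,
        EuclideanSpace.single_apply]
      have h1 : (∑ k : Fin n,
          (x k.castSucc ⊔ 0) * if i.castSucc = k.castSucc then (1:ℝ) else 0)
          = x i.castSucc ⊔ 0 := by
        rw [Finset.sum_eq_single i]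
        · simp
        · intro k _ hk
          rw [if_neg (by simp [Fin.castSucc_inj]; exact fun e => hk e.symm), mul_zero]
        · simp
      rw [h1]
      have hxd0 : x (Fin.last n) ≠ 0 := hxd.ne'
      have h2 : x (Fin.last n) * h i = min (x i.castSucc) 0 := by
        rw [hh]; field_simp
      rw [h2]
      have h3 := min_add_max (x i.castSucc) 0
      have h4 : (0 : EuclideanSpace ℝ (Fin (n+1))) i.castSucc = 0 := rfl
      rw [h4]
      linarith
  rw [key]
  exact (convex_convexHull ℝ S).sum_mem (fun o _ => hwnonneg o) hwsum
    (fun o _ => subset_convexHull ℝ S (hmem o))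
end
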